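/- Let τ := Δ + q_δ, where q_δ is the absolute value of the δ-quantile of Lap(Δ/ε), let M denote the PositiveLaplaceMechanism with parameters ε, τ and sensitivity Δ, let v ∈ ℝ and v' = v + Δ. Then for every measurable set S ⊂ ℝ, P(M(v') ∈ S ∩ [v, v + Δ]) ≤ δ. -/

import Mathlib

open MeasureTheory Real

/-- The Laplace distribution on ℝ with location 0 and scale `b`. -/
noncomputable def laplace (b : ℝ) : Measure ℝ :=
  volume.withDensity fun x => ENNReal.ofReal ((2 * b)⁻¹ * Real.exp (-|x| / b))

/-- On input `v`, the PositiveLaplaceMechanism samples `η ~ Lap(Δ/ε)` and outputs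
`max v (v + τ + η)`; so `P(M(v) ∈ S)` is the Laplace measure of the preimage. -/
noncomputable def posLapProb (ε τ Δ : ℝ) (v : ℝ) (S : Set ℝ) : ENNReal :=
  laplace (Δ / ε) {η : ℝ | max v (v + τ + η) ∈ S}

lemma exp_div_integrableOn_Iic {b : ℝ} (hb : 0 < b) (a : ℝ) :
    IntegrableOn (fun x => Real.exp (x / b)) (Set.Iic a) := by
  refine integrableOn_Iic_of_intervalIntegral_norm_bounded (b * Real.exp (a / b)) a
    (fun y => (Continuous.integrableOn_Ioc (by fun_prop)))
    Filter.tendsto_id ?_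
  filter_upwards [Filter.Iic_mem_atBot a] with y (hy : y ≤ a)
  simp only [Real.norm_eq_abs, Real.abs_exp, id]
  rw [intervalIntegral.integral_comp_div (f := Real.exp) hb.ne', integral_exp]
  have h1 : Real.exp (y / b) ≤ Real.exp (a / b) :=
    Real.exp_le_exp.2 (by gcongr)
  have : Real.exp (a / b) - Real.exp (y / b) ≤ Real.exp (a / b) := by
    have := (Real.exp_pos (y / b)).le; linarith
  exact mul_le_mul_of_nonneg_left this hb.le

lemma integral_exp_div_Iic {b : ℝ} (hb : 0 < b) (a : ℝ) :
    ∫ x in Set.Iic a, Real.exp (x / b) = b * Real.exp (a / b) := by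
  refine tendsto_nhds_unique
    (intervalIntegral_tendsto_integral_Iic _ (exp_div_integrableOn_Iic hb a) Filter.tendsto_id) ?_
  have hcomp : ∀ y : ℝ, ∫ x in y..a, Real.exp (x / b)
      = b * (Real.exp (a / b) - Real.exp (y / b)) := by
    intro y
    rw [intervalIntegral.integral_comp_div (f := Real.exp) hb.ne', integral_exp,
      smul_eq_mul]
  simp only [hcomp]
  have h1 : Filter.Tendsto (fun y : ℝ => Real.exp (y / b)) Filter.atBot (nhds 0) :=
    Real.tendsto_exp_atBot.comp (Filter.tendsto_id.atBot_div_const hb)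
  have h2 : Filter.Tendsto (fun y : ℝ => b * (Real.exp (a / b) - Real.exp (y / b)))
      Filter.atBot (nhds (b * (Real.exp (a / b) - 0))) :=
    (Filter.Tendsto.const_sub _ h1).const_mul b
  simpa using h2

lemma laplace_Iic {b : ℝ} (hb : 0 < b) {a : ℝ} (ha : a ≤ 0) :
    laplace b (Set.Iic a) = ENNReal.ofReal (Real.exp (a / b) / 2) := by
  rw [laplace, withDensity_apply _ measurableSet_Iic]
  have hcongr : ∀ x ∈ Set.Iic a,
      ENNReal.ofReal ((2 * b)⁻¹ * Real.exp (-|x| / b))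
        = ENNReal.ofReal ((2 * b)⁻¹ * Real.exp (x / b)) := by
    intro x hx
    rw [abs_of_nonpos (le_trans hx ha), neg_neg]
  rw [setLIntegral_congr_fun measurableSet_Iic hcongr]
  rw [← ofReal_integral_eq_lintegral_ofReal
      (((exp_div_integrableOn_Iic hb a).const_mul _))
      (Filter.Eventually.of_forall fun x => by positivity)]
  rw [MeasureTheory.integral_const_mul, integral_exp_div_Iic hb a]
  congr 1
  field_simp

/-- With `τ := Δ + q_δ` where `q_δ = (Δ/ε)·ln(1/(2δ))` is the absolute value of the
`δ`-quantile of `Lap(Δ/ε)`, for `v' = v + Δ` and every measurable `S`,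
`P(M(v') ∈ S ∩ [v, v + Δ]) ≤ δ`. -/
theorem stmt_6 (ε δ Δ : ℝ) (hε : 0 < ε) (hδ : δ ∈ Set.Ioo (0 : ℝ) (1 / 2)) (hΔ : 0 < Δ)
    (τ : ℝ) (hτ : τ = Δ + (Δ / ε) * Real.log (1 / (2 * δ)))
    (v v' : ℝ) (hv' : v' = v + Δ) :
    ∀ S : Set ℝ, MeasurableSet S →
      posLapProb ε τ Δ v' (S ∩ Set.Icc v (v + Δ)) ≤ ENNReal.ofReal δ := by
  intro S _
  obtain ⟨hδ0, hδ2⟩ := hδ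
  have hb : 0 < Δ / ε := div_pos hΔ hε
  have hlog : 0 < Real.log (1 / (2 * δ)) := by
    apply Real.log_pos
    rw [lt_div_iff₀ (by linarith)]
    linarith
  have hτpos : 0 < τ := by
    rw [hτ]
    have : 0 < (Δ / ε) * Real.log (1 / (2 * δ)) := mul_pos hb hlog
    linarith
  -- the event is contained in {η ≤ -τ}
  have hsub : {η : ℝ | max v' (v' + τ + η) ∈ S ∩ Set.Icc v (v + Δ)} ⊆ Set.Iic (-τ) := by
    intro η hη
    have h2 : max v' (v' + τ + η) ≤ v + Δ := hη.2.2
    have h3 : v' + τ + η ≤ v + Δ := le_trans (le_max_right _ _) h2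
    rw [hv'] at h3
    exact Set.mem_Iic.2 (by linarith)
  calc posLapProb ε τ Δ v' (S ∩ Set.Icc v (v + Δ))
      ≤ laplace (Δ / ε) (Set.Iic (-τ)) := measure_mono hsub
    _ = ENNReal.ofReal (Real.exp (-τ / (Δ / ε)) / 2) :=
        laplace_Iic hb (by linarith)
    _ ≤ ENNReal.ofReal δ := by
        apply ENNReal.ofReal_le_ofReal
        have hval : Real.exp (-τ / (Δ / ε)) = Real.exp (-ε) * (2 * δ) := by
          rw [hτ]
          have h1 : -(Δ + Δ / ε * Real.log (1 / (2 * δ))) / (Δ / ε)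
              = -ε + -Real.log (1 / (2 * δ)) := by
            field_simp
            ring
          rw [h1, Real.exp_add, Real.exp_neg (Real.log (1 / (2 * δ))),
            Real.exp_log (by positivity)]
          field_simp
        rw [hval]
        have hexp : Real.exp (-ε) ≤ 1 := Real.exp_le_one_iff.2 (by linarith)
        calc Real.exp (-ε) * (2 * δ) / 2 ≤ 1 * (2 * δ) / 2 := by
              apply div_le_div_of_nonneg_right _ (by norm_num)
              exact mul_le_mul_of_nonneg_right hexp (by linarith)
          _ = δ := by ring
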